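/- The commutation relation [L, A_x] = A_y holds for the symmetry operators of the two-dimensional hydrogen atom: for every function f : ℝ² → ℂ that is C^∞ on S = ℝ² \ {0} and every p ∈ S, one has L(A_x f)(p) − A_x(L f)(p) = A_y f(p). -/

import Mathlib

noncomputable section

open Complex

/-- `S = ℝ² \ {0}`. -/
def S : Set (ℝ × ℝ) := {p | p ≠ 0}

/-- Partial derivative in the first coordinate. -/
def pdx (f : ℝ × ℝ → ℂ) (p : ℝ × ℝ) : ℂ := fderiv ℝ f p (1, 0)

/-- Partial derivative in the second coordinate. -/
def pdy (f : ℝ × ℝ → ℂ) (p : ℝ × ℝ) : ℂ := fderiv ℝ f p (0, 1)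

/-- `r(x,y) = √(x² + y²)`. -/
def rr (p : ℝ × ℝ) : ℝ := Real.sqrt (p.1 ^ 2 + p.2 ^ 2)

lemma aux_isOpen_S : IsOpen S := isOpen_ne

def pd (v : ℝ × ℝ) (g : ℝ × ℝ → ℂ) (p : ℝ × ℝ) : ℂ := fderiv ℝ g p v

def Sm (g : ℝ × ℝ → ℂ) : Prop := ∀ q ∈ S, ContDiffAt ℝ (⊤ : ℕ∞) g q

lemma Sm.diffAt {g} (hg : Sm g) {q} (hq : q ∈ S) : DifferentiableAt ℝ g q :=
  (hg q hq).differentiableAt (by simp)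

lemma Sm.pd' {g} (hg : Sm g) (v : ℝ × ℝ) : Sm (pd v g) := by
  intro q hq
  have h1 : ContDiffAt ℝ (⊤ : ℕ∞) (fderiv ℝ g) q :=
    (hg q hq).fderiv_right (by exact_mod_cast le_top)
  exact ((ContinuousLinearMap.apply ℝ ℂ v).contDiff (n:=(⊤:ℕ∞))).comp_contDiffAt q h1

lemma Sm.fderiv_diffAt {g} (hg : Sm g) {q} (hq : q ∈ S) :
    DifferentiableAt ℝ (fderiv ℝ g) q :=
  (((hg q hq).fderiv_right (m := (⊤:ℕ∞)) (by exact_mod_cast le_top))).differentiableAt (by simp)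

lemma pd_pd {g p} (hg' : DifferentiableAt ℝ (fderiv ℝ g) p) (v w : ℝ × ℝ) :
    pd v (pd w g) p = fderiv ℝ (fderiv ℝ g) p v w := by
  unfold pd
  rw [show (fun q => fderiv ℝ g q w) = (fun q => (fderiv ℝ g q) ((fun _ => w) q)) from rfl]
  rw [fderiv_clm_apply hg' (differentiableAt_const w)]
  simp

lemma pd_comm {g p} (hg : Sm g) (hp : p ∈ S) (v w : ℝ × ℝ) :
    pd v (pd w g) p = pd w (pd v g) p := by
  rw [pd_pd (hg.fderiv_diffAt hp), pd_pd (hg.fderiv_diffAt hp)]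
  exact ((hg p hp).isSymmSndFDerivAt (by rw [minSmoothness_of_isRCLikeNormedField]; exact WithTop.coe_le_coe.2 (le_top : (2:ℕ∞) ≤ ⊤))).eq v w

lemma pd_congr {g₁ g₂ : ℝ × ℝ → ℂ} {p} (hp : p ∈ S) (h : ∀ q ∈ S, g₁ q = g₂ q) (v : ℝ × ℝ) :
    pd v g₁ p = pd v g₂ p := by
  unfold pd
  rw [Filter.EventuallyEq.fderiv_eq (Filter.eventually_of_mem (aux_isOpen_S.mem_nhds hp) h)]

lemma pd_add {g h : ℝ × ℝ → ℂ} {p} (hg : DifferentiableAt ℝ g p)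
    (hh : DifferentiableAt ℝ h p) (v : ℝ × ℝ) :
    pd v (fun q => g q + h q) p = pd v g p + pd v h p := by
  unfold pd; rw [fderiv_fun_add hg hh]; simp

lemma pd_sub {g h : ℝ × ℝ → ℂ} {p} (hg : DifferentiableAt ℝ g p)
    (hh : DifferentiableAt ℝ h p) (v : ℝ × ℝ) :
    pd v (fun q => g q - h q) p = pd v g p - pd v h p := by
  unfold pd; rw [fderiv_fun_sub hg hh]; simp

lemma pd_const_mul {g : ℝ × ℝ → ℂ} {p} (hg : DifferentiableAt ℝ g p) (c : ℂ) (v : ℝ × ℝ) :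
    pd v (fun q => c * g q) p = c * pd v g p := by
  unfold pd; rw [fderiv_const_mul hg c]; simp

lemma pd_fst_mul {g : ℝ × ℝ → ℂ} {p} (hg : DifferentiableAt ℝ g p) (v : ℝ × ℝ) :
    pd v (fun q => (q.1 : ℂ) * g q) p = (v.1 : ℂ) * g p + (p.1 : ℂ) * pd v g p := by
  have h1 : HasFDerivAt (fun q : ℝ × ℝ => (q.1 : ℂ))
      (Complex.ofRealCLM.comp (ContinuousLinearMap.fst ℝ ℝ ℝ)) p :=
    (Complex.ofRealCLM.comp (ContinuousLinearMap.fst ℝ ℝ ℝ)).hasFDerivAt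
  unfold pd
  rw [(h1.fun_mul hg.hasFDerivAt).fderiv]
  simp
  ring

lemma pd_snd_mul {g : ℝ × ℝ → ℂ} {p} (hg : DifferentiableAt ℝ g p) (v : ℝ × ℝ) :
    pd v (fun q => (q.2 : ℂ) * g q) p = (v.2 : ℂ) * g p + (p.2 : ℂ) * pd v g p := by
  have h1 : HasFDerivAt (fun q : ℝ × ℝ => (q.2 : ℂ))
      (Complex.ofRealCLM.comp (ContinuousLinearMap.snd ℝ ℝ ℝ)) p :=
    (Complex.ofRealCLM.comp (ContinuousLinearMap.snd ℝ ℝ ℝ)).hasFDerivAt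
  unfold pd
  rw [(h1.fun_mul hg.hasFDerivAt).fderiv]
  simp
  ring

lemma pd_ofReal_mul {u : ℝ × ℝ → ℝ} {U : (ℝ × ℝ) →L[ℝ] ℝ} {g : ℝ × ℝ → ℂ} {p}
    (hu : HasFDerivAt u U p) (hg : DifferentiableAt ℝ g p) (v : ℝ × ℝ) :
    pd v (fun q => ((u q : ℝ) : ℂ) * g q) p
      = ((U v : ℝ) : ℂ) * g p + ((u p : ℝ) : ℂ) * pd v g p := by
  have h1 : HasFDerivAt (fun q => ((u q : ℝ) : ℂ)) (Complex.ofRealCLM.comp U) p :=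
    Complex.ofRealCLM.hasFDerivAt.comp p hu
  unfold pd
  rw [(h1.fun_mul hg.hasFDerivAt).fderiv]
  simp
  ring

lemma Sm.mul {g h : ℝ × ℝ → ℂ} (hg : Sm g) (hh : Sm h) : Sm (fun q => g q * h q) :=
  fun q hq => (hg q hq).mul (hh q hq)

lemma Sm.add {g h : ℝ × ℝ → ℂ} (hg : Sm g) (hh : Sm h) : Sm (fun q => g q + h q) :=
  fun q hq => (hg q hq).add (hh q hq)

lemma Sm.sub {g h : ℝ × ℝ → ℂ} (hg : Sm g) (hh : Sm h) : Sm (fun q => g q - h q) :=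
  fun q hq => (hg q hq).sub (hh q hq)

lemma Sm_fstC : Sm (fun q : ℝ × ℝ => (q.1 : ℂ)) :=
  fun q _ => (Complex.ofRealCLM.comp (ContinuousLinearMap.fst ℝ ℝ ℝ)).contDiff.contDiffAt

lemma Sm_sndC : Sm (fun q : ℝ × ℝ => (q.2 : ℂ)) :=
  fun q _ => (Complex.ofRealCLM.comp (ContinuousLinearMap.snd ℝ ℝ ℝ)).contDiff.contDiffAt

lemma sq_add_pos {p : ℝ × ℝ} (hp : p ∈ S) : 0 < p.1 ^ 2 + p.2 ^ 2 := by
  have h : p.1 ≠ 0 ∨ p.2 ≠ 0 := by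
    by_contra h; push_neg at h; exact hp (Prod.ext h.1 h.2)
  rcases h with h | h
  · positivity
  · positivity

lemma rr_pos {p : ℝ × ℝ} (hp : p ∈ S) : 0 < rr p := Real.sqrt_pos.2 (sq_add_pos hp)

lemma rr_sq {p : ℝ × ℝ} (hp : p ∈ S) : rr p ^ 2 = p.1 ^ 2 + p.2 ^ 2 :=
  Real.sq_sqrt (sq_add_pos hp).le

lemma coulomb_hasFDerivAt (k : ℝ) {p : ℝ × ℝ} (hp : p ∈ S) :
    ∃ U : (ℝ × ℝ) →L[ℝ] ℝ, HasFDerivAt (fun q : ℝ × ℝ => k * q.1 / rr q) U p ∧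
      U (1, 0) = k * p.2 ^ 2 * rr p / (p.1 ^ 2 + p.2 ^ 2) ^ 2 ∧
      U (0, 1) = -(k * p.1 * p.2) * rr p / (p.1 ^ 2 + p.2 ^ 2) ^ 2 := by
  have hs := sq_add_pos hp
  have hr := rr_pos hp
  have h1 : HasFDerivAt (fun q : ℝ × ℝ => q.1 ^ 2 + q.2 ^ 2)
      ((2 * p.1) • ContinuousLinearMap.fst ℝ ℝ ℝ + (2 * p.2) • ContinuousLinearMap.snd ℝ ℝ ℝ) p := by
    have ha := ((hasFDerivAt_fst (p := p) (𝕜 := ℝ)).fun_mul (hasFDerivAt_fst (p := p))).fun_add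
      ((hasFDerivAt_snd (p := p)).fun_mul (hasFDerivAt_snd (p := p)))
    have : (fun q : ℝ × ℝ => q.1 ^ 2 + q.2 ^ 2) = fun q : ℝ × ℝ => q.1 * q.1 + q.2 * q.2 := by
      funext q; ring
    rw [this]
    refine ha.congr_fderiv ?_
    ext v <;> simp <;> ring
  have h2 : HasFDerivAt rr ((1 / (2 * rr p)) •
      ((2 * p.1) • ContinuousLinearMap.fst ℝ ℝ ℝ + (2 * p.2) • ContinuousLinearMap.snd ℝ ℝ ℝ)) p := by
    have := h1.sqrt (ne_of_gt hs)
    exact this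
  have h3 : HasFDerivAt (fun q : ℝ × ℝ => k * q.1) (k • ContinuousLinearMap.fst ℝ ℝ ℝ) p := by
    have := (hasFDerivAt_fst (p := p) (𝕜 := ℝ)).const_mul k
    convert this using 1
  have hinv : HasFDerivAt (fun q : ℝ × ℝ => (rr q)⁻¹)
      ((-((rr p) ^ 2)⁻¹) • ((1 / (2 * rr p)) •
      ((2 * p.1) • ContinuousLinearMap.fst ℝ ℝ ℝ + (2 * p.2) • ContinuousLinearMap.snd ℝ ℝ ℝ))) p :=
    (hasDerivAt_inv (ne_of_gt hr)).comp_hasFDerivAt p h2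
  have h4 := h3.mul hinv
  have heq : (fun q : ℝ × ℝ => k * q.1 / rr q) = fun q : ℝ × ℝ => (k * q.1) * (rr q)⁻¹ := by
    funext q; rw [div_eq_mul_inv]
  rw [heq]
  have hr2 := rr_sq hp
  refine ⟨_, h4, ?_, ?_⟩
  · simp [ContinuousLinearMap.smul_apply, ContinuousLinearMap.sub_apply]
    rw [hr2]
    field_simp
    linear_combination (-(k*p.2^2)) * hr2
  · simp [ContinuousLinearMap.smul_apply, ContinuousLinearMap.sub_apply]
    rw [hr2]
    field_simp
    linear_combination (k*p.1*p.2) * hr2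

lemma pd_L {g1 g2 : ℝ × ℝ → ℂ} (h1 : Sm g1) (h2 : Sm g2) {p : ℝ × ℝ} (hp : p ∈ S) (v : ℝ × ℝ) :
    pd v (fun q => (q.2 : ℂ) * g1 q - (q.1 : ℂ) * g2 q) p
      = ((v.2 : ℂ) * g1 p + (p.2 : ℂ) * pd v g1 p)
        - ((v.1 : ℂ) * g2 p + (p.1 : ℂ) * pd v g2 p) := by
  rw [pd_sub ((Sm_sndC.mul h1).diffAt hp) ((Sm_fstC.mul h2).diffAt hp),
      pd_snd_mul (h1.diffAt hp), pd_fst_mul (h2.diffAt hp)]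

/-- Angular momentum operator: `(Lf)(p) = y·∂ₓf(p) − x·∂_yf(p)`. -/
def Lop (f : ℝ × ℝ → ℂ) (p : ℝ × ℝ) : ℂ := (p.2 : ℂ) * pdx f p - (p.1 : ℂ) * pdy f p

/-- Schrödinger operator of the 2D hydrogen atom. -/
def Hop (k : ℝ) (f : ℝ × ℝ → ℂ) (p : ℝ × ℝ) : ℂ :=
  -(1 / 2 : ℂ) * (pdx (pdx f) p + pdy (pdy f) p) - ((k / rr p : ℝ) : ℂ) * f p

/-- First component of the quantum Laplace–Runge–Lenz vector. -/
def Axop (k : ℝ) (f : ℝ × ℝ → ℂ) (p : ℝ × ℝ) : ℂ :=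
  (Complex.I / (Real.sqrt 2 : ℂ)) *
    ((p.1 : ℂ) * pdy (pdy f) p - (p.2 : ℂ) * pdx (pdy f) p - (1 / 2 : ℂ) * pdx f p
      + ((k * p.1 / rr p : ℝ) : ℂ) * f p)

/-- Second component of the quantum Laplace–Runge–Lenz vector. -/
def Ayop (k : ℝ) (f : ℝ × ℝ → ℂ) (p : ℝ × ℝ) : ℂ :=
  (Complex.I / (Real.sqrt 2 : ℂ)) *
    ((p.2 : ℂ) * pdx (pdx f) p - (p.1 : ℂ) * pdx (pdy f) p - (1 / 2 : ℂ) * pdy f p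
      + ((k * p.2 / rr p : ℝ) : ℂ) * f p)

set_option maxHeartbeats 2000000 in
/-- The commutation relation `[L, A_x] = A_y`, pointwise on `S = ℝ² \ {0}`. -/
theorem stmt_3 (k : ℝ) (hk : 0 < k) (f : ℝ × ℝ → ℂ)
    (hf : ContDiffOn ℝ (⊤ : ℕ∞) f S) (p : ℝ × ℝ) (hp : p ∈ S) :
    Lop (Axop k f) p - Axop k (Lop f) p = Ayop k f p := by
  have e1 : pdx = pd (1, 0) := rfl
  have e2 : pdy = pd (0, 1) := rfl
  simp only [Lop, Axop, Ayop, e1, e2]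
  obtain ⟨U, hU, hUx, hUy⟩ := coulomb_hasFDerivAt k hp
  -- smoothness
  have smf : Sm f := fun q hq => hf.contDiffAt (aux_isOpen_S.mem_nhds hq)
  have smfx : Sm (pd (1,0) f) := smf.pd' (1,0)
  have smfy : Sm (pd (0,1) f) := smf.pd' (0,1)
  have smfxx : Sm (pd (1,0) (pd (1,0) f)) := smfx.pd' (1,0)
  have smfyx : Sm (pd (0,1) (pd (1,0) f)) := smfx.pd' (0,1)
  have smfxy : Sm (pd (1,0) (pd (0,1) f)) := smfy.pd' (1,0)
  have smfyy : Sm (pd (0,1) (pd (0,1) f)) := smfy.pd' (0,1)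
  -- differentiability of the Coulomb factor
  have hcoul : DifferentiableAt ℝ (fun q : ℝ × ℝ => ((k * q.1 / rr q : ℝ) : ℂ)) p :=
    (Complex.ofRealCLM.hasFDerivAt.comp p hU).differentiableAt
  -- derivative of Axop k f
  have hA : DifferentiableAt ℝ (fun q : ℝ × ℝ => (q.1 : ℂ) * pd (0,1) (pd (0,1) f) q) p :=
    (Sm_fstC.mul smfyy).diffAt hp
  have hB : DifferentiableAt ℝ (fun q : ℝ × ℝ => (q.2 : ℂ) * pd (1,0) (pd (0,1) f) q) p :=
    (Sm_sndC.mul smfxy).diffAt hp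
  have hC : DifferentiableAt ℝ (fun q : ℝ × ℝ => (1/2 : ℂ) * pd (1,0) f q) p :=
    (smfx.diffAt hp).const_mul (1/2 : ℂ)
  have hD : DifferentiableAt ℝ (fun q : ℝ × ℝ => ((k * q.1 / rr q : ℝ) : ℂ) * f q) p :=
    hcoul.mul (smf.diffAt hp)
  have hAB : DifferentiableAt ℝ (fun q : ℝ × ℝ => (q.1 : ℂ) * pd (0,1) (pd (0,1) f) q
      - (q.2 : ℂ) * pd (1,0) (pd (0,1) f) q) p := hA.sub hB
  have hABC : DifferentiableAt ℝ (fun q : ℝ × ℝ => (q.1 : ℂ) * pd (0,1) (pd (0,1) f) q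
      - (q.2 : ℂ) * pd (1,0) (pd (0,1) f) q - (1/2 : ℂ) * pd (1,0) f q) p := hAB.sub hC
  have hABCD : DifferentiableAt ℝ (fun q : ℝ × ℝ => (q.1 : ℂ) * pd (0,1) (pd (0,1) f) q
      - (q.2 : ℂ) * pd (1,0) (pd (0,1) f) q - (1/2 : ℂ) * pd (1,0) f q
      + ((k * q.1 / rr q : ℝ) : ℂ) * f q) p := hABC.add hD
  have hAxv : ∀ v : ℝ × ℝ, pd v (Axop k f) p = Complex.I / (Real.sqrt 2 : ℂ) *
      ( ((v.1 : ℂ) * pd (0,1) (pd (0,1) f) p + (p.1 : ℂ) * pd v (pd (0,1) (pd (0,1) f)) p)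
      - ((v.2 : ℂ) * pd (1,0) (pd (0,1) f) p + (p.2 : ℂ) * pd v (pd (1,0) (pd (0,1) f)) p)
      - (1/2 : ℂ) * pd v (pd (1,0) f) p
      + (((U v : ℝ) : ℂ) * f p + ((k * p.1 / rr p : ℝ) : ℂ) * pd v f p) ) := by
    intro v
    have hrfl : Axop k f = fun q => Complex.I / (Real.sqrt 2 : ℂ) *
        ((q.1 : ℂ) * pd (0,1) (pd (0,1) f) q - (q.2 : ℂ) * pd (1,0) (pd (0,1) f) q
          - (1/2 : ℂ) * pd (1,0) f q + ((k * q.1 / rr q : ℝ) : ℂ) * f q) := rfl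
    rw [hrfl]
    simp only [pd_const_mul hABCD, pd_add hABC hD, pd_sub hAB hC, pd_sub hA hB,
      pd_fst_mul (smfyy.diffAt hp), pd_snd_mul (smfxy.diffAt hp),
      pd_const_mul (smfx.diffAt hp), pd_ofReal_mul hU (smf.diffAt hp)]
  -- first derivatives of Lop f on S
  have hLrfl : Lop f = fun q => (q.2 : ℂ) * pd (1,0) f q - (q.1 : ℂ) * pd (0,1) f q := rfl
  have hLv : ∀ q ∈ S, ∀ v : ℝ × ℝ, pd v (Lop f) q
      = ((v.2 : ℂ) * pd (1,0) f q + (q.2 : ℂ) * pd v (pd (1,0) f) q)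
        - ((v.1 : ℂ) * pd (0,1) f q + (q.1 : ℂ) * pd v (pd (0,1) f) q) := by
    intro q hq v
    rw [hLrfl, pd_L smfx smfy hq]
  have hLy : ∀ q ∈ S, pd (0,1) (Lop f) q
      = pd (1,0) f q + ((q.2 : ℂ) * pd (0,1) (pd (1,0) f) q
          - (q.1 : ℂ) * pd (0,1) (pd (0,1) f) q) := by
    intro q hq
    rw [hLv q hq (0,1)]
    norm_num
    ring
  -- second derivatives of Lop f at p
  have hLyy : pd (0,1) (pd (0,1) (Lop f)) p
      = pd (0,1) (pd (1,0) f) p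
        + ((pd (0,1) (pd (1,0) f) p + (p.2 : ℂ) * pd (0,1) (pd (0,1) (pd (1,0) f)) p)
          - ((p.1 : ℂ) * pd (0,1) (pd (0,1) (pd (0,1) f)) p)) := by
    rw [pd_congr hp hLy (0,1),
        pd_add (smfx.diffAt hp) (((Sm_sndC.mul smfyx).sub (Sm_fstC.mul smfyy)).diffAt hp),
        pd_L smfyx smfyy hp]
    norm_num
  have hLxy : pd (1,0) (pd (0,1) (Lop f)) p
      = pd (1,0) (pd (1,0) f) p
        + (((p.2 : ℂ) * pd (1,0) (pd (0,1) (pd (1,0) f)) p)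
          - (pd (0,1) (pd (0,1) f) p + (p.1 : ℂ) * pd (1,0) (pd (0,1) (pd (0,1) f)) p)) := by
    rw [pd_congr hp hLy (1,0),
        pd_add (smfx.diffAt hp) (((Sm_sndC.mul smfyx).sub (Sm_fstC.mul smfyy)).diffAt hp),
        pd_L smfyx smfyy hp]
    norm_num
  have hLx : pd (1,0) (Lop f) p
      = (p.2 : ℂ) * pd (1,0) (pd (1,0) f) p - pd (0,1) f p
        - (p.1 : ℂ) * pd (1,0) (pd (0,1) f) p := by
    rw [hLv p hp (1,0)]
    norm_num
    ring
  -- Schwarz symmetry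
  have sc1 : pd (0,1) (pd (1,0) f) p = pd (1,0) (pd (0,1) f) p := pd_comm smf hp (0,1) (1,0)
  have sc2 : pd (0,1) (pd (1,0) (pd (0,1) f)) p = pd (1,0) (pd (0,1) (pd (0,1) f)) p :=
    pd_comm smfy hp (0,1) (1,0)
  have sc3 : pd (0,1) (pd (0,1) (pd (1,0) f)) p = pd (1,0) (pd (0,1) (pd (0,1) f)) p := by
    rw [pd_congr hp (fun q hq => pd_comm smf hq (0,1) (1,0)) (0,1), sc2]
  have sc4 : pd (1,0) (pd (0,1) (pd (1,0) f)) p = pd (1,0) (pd (1,0) (pd (0,1) f)) p :=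
    pd_congr hp (fun q hq => pd_comm smf hq (0,1) (1,0)) (1,0)
  -- put everything together
  have hr0 : ((rr p : ℝ) : ℂ) ≠ 0 := by
    exact_mod_cast (rr_pos hp).ne'
  have hs0 : ((p.1 : ℂ)^2 + (p.2 : ℂ)^2) ≠ 0 := by
    have : ((p.1^2 + p.2^2 : ℝ) : ℂ) ≠ 0 := by exact_mod_cast (sq_add_pos hp).ne'
    push_cast at this
    exact this
  have hsqrt2 : ((Real.sqrt 2 : ℝ) : ℂ) ≠ 0 := by
    exact_mod_cast (Real.sqrt_pos.2 two_pos).ne'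
  have hrc : ((rr p : ℝ) : ℂ)^2 = (p.1 : ℂ)^2 + (p.2 : ℂ)^2 := by
    have := congrArg (fun t : ℝ => (t : ℂ)) (rr_sq hp)
    push_cast at this
    exact this
  have hw1 : ((k * p.1 / rr p : ℝ) : ℂ)
      = (k : ℂ) * (p.1 : ℂ) * ((rr p : ℝ) : ℂ) / ((p.1 : ℂ)^2 + (p.2 : ℂ)^2) := by
    rw [← hrc]
    push_cast
    field_simp
  have hw2 : ((k * p.2 / rr p : ℝ) : ℂ)
      = (k : ℂ) * (p.2 : ℂ) * ((rr p : ℝ) : ℂ) / ((p.1 : ℂ)^2 + (p.2 : ℂ)^2) := by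
    rw [← hrc]
    push_cast
    field_simp
  rw [hAxv (1,0), hAxv (0,1), hLyy, hLxy, hLx, hUx, hUy]
  rw [sc1, sc2, sc3, sc4, hw1, hw2]
  push_cast
  simp only [div_eq_mul_inv, ← inv_pow]
  linear_combination (Complex.I / (Real.sqrt 2 : ℂ) * (k : ℂ) * (p.2 : ℂ) * ((rr p : ℝ) : ℂ)
    * f p / ((p.1 : ℂ)^2 + (p.2 : ℂ)^2)) * (mul_inv_cancel₀ hs0)
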